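/- Let n ≥ 3, m ≥ 2 and N = nm−m+1. For each k with 1 ≤ k ≤ m−1, the set X_k is a connected component of μ_m(Γ(D_N,1)), and the full subquiver of μ_m(Γ(D_N,1)) induced by X_k, with translation τ^m, is isomorphic as a translation quiver to Γ(A_{n−1}, N). -/

import Mathlib

/-!
Common combinatorial definitions for the translation quivers of
Baur–Marsh, "A geometric description of the m-cluster categories of type Dₙ".

* `DLab` is the type of second coordinates of vertices of a type-`D` translation
  quiver: `DLab.z false` is the label `0`, `DLab.z true` is the label `0̄`, and
  `DLab.pos j` is the (unbarred) label `j ≥ 1`.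
* `DVertex N h` is the vertex set `ℤ/N × {0, 0̄, 1, …, h−2}`.
* `DArrow N h` is the arrow relation of the translation quiver with `N` columns
  and labels `0, 0̄, 1, …, h−2`.
* `DTau N c` is the translation: `(i,j) ↦ (i−1, j̄)` when `i = 0`, `j ∈ {0,0̄}` and
  `c` is odd, and `(i,j) ↦ (i−1,j)` otherwise.

With these conventions, `Γ(D_N, 1)` is `(DVertex N N, DArrow N N, DTau N N)`
and `Γ(D_n, m)` is
`(DVertex (n*m−m+1) n, DArrow (n*m−m+1) n, DTau (n*m−m+1) (n*m))`.
-/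

/-- Labels `0` (= `z false`), `0̄` (= `z true`) and `j ≥ 1` (= `pos j`). -/
inductive DLab : Type
  | z : Bool → DLab
  | pos : ℕ → DLab
deriving DecidableEq

/-- The bar operation on labels: swaps `0` and `0̄`, fixes all other labels. -/
def DLab.bar : DLab → DLab
  | .z b => .z (!b)
  | .pos j => .pos j

/-- The vertex set `ℤ/N × {0, 0̄, 1, …, h−2}`. -/
def DVertex (N h : ℕ) : Set (ZMod N × DLab) :=
  {v | ∀ j : ℕ, v.2 = DLab.pos j → 1 ≤ j ∧ j ≤ h - 2}

/-- The arrows `(i,j) → (i,j−1)` and `(i,j−1) → (i+1,j)` for `1 ≤ j ≤ h−2`,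
together with `(i,1) → (i,0̄)` and `(i,0̄) → (i+1,1)`. -/
inductive DArrow (N h : ℕ) : ZMod N × DLab → ZMod N × DLab → Prop
  | down (i : ZMod N) (j : ℕ) (h1 : 2 ≤ j) (h2 : j ≤ h - 2) :
      DArrow N h (i, DLab.pos j) (i, DLab.pos (j - 1))
  | toZ (i : ZMod N) (b : Bool) :
      DArrow N h (i, DLab.pos 1) (i, DLab.z b)
  | fromZ (i : ZMod N) (b : Bool) :
      DArrow N h (i, DLab.z b) (i + 1, DLab.pos 1)
  | up (i : ZMod N) (j : ℕ) (h1 : 1 ≤ j) (h2 : j + 1 ≤ h - 2) :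
      DArrow N h (i, DLab.pos j) (i + 1, DLab.pos (j + 1))

/-- The translation `τ(i,j) = (i−1, j̄)` if `i = 0`, `j ∈ {0,0̄}` and `c` is odd,
and `τ(i,j) = (i−1, j)` otherwise.  For `Γ(D_N,1)` one takes `c = N`; for
`Γ(D_n,m)` one takes `c = n*m` (and `N = n*m−m+1`). -/
def DTau (N c : ℕ) : ZMod N × DLab → ZMod N × DLab := fun v =>
  match v with
  | (i, DLab.z b) =>
      if i = 0 ∧ c % 2 = 1 then (i - 1, DLab.z (!b)) else (i - 1, DLab.z b)
  | (i, DLab.pos j) => (i - 1, DLab.pos j)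

/-- `p 0 → p 1 → ⋯ → p m` is a path in `Γ(D_N,1)`. -/
def IsPath (N m : ℕ) (p : ℕ → ZMod N × DLab) : Prop :=
  ∀ k, k < m → DArrow N N (p k) (p (k + 1))

/-- `p 0 → p 1 → ⋯ → p m` is a sectional path in `Γ(D_N,1)`:
`τ (p (k+1)) ≠ p (k−1)` for `1 ≤ k ≤ m − 1`. -/
def IsSectional (N m : ℕ) (p : ℕ → ZMod N × DLab) : Prop :=
  IsPath N m p ∧ ∀ k, 1 ≤ k → k + 1 ≤ m → DTau N N (p (k + 1)) ≠ p (k - 1)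

/-- The extra condition defining restricted paths: there is no `1 ≤ k ≤ m−1`
such that for some `r`, `p (k+1) = (r, 0)` and `p (k−1) = (r−1, 0̄)`, or
`p (k+1) = (r, 0̄)` and `p (k−1) = (r−1, 0)`. -/
def NoForbidden (N m : ℕ) (p : ℕ → ZMod N × DLab) : Prop :=
  ¬ ∃ k, 1 ≤ k ∧ k + 1 ≤ m ∧ ∃ r : ZMod N,
      ((p (k + 1) = (r, DLab.z false) ∧ p (k - 1) = (r - 1, DLab.z true)) ∨
       (p (k + 1) = (r, DLab.z true) ∧ p (k - 1) = (r - 1, DLab.z false)))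

/-- `p 0 → p 1 → ⋯ → p m` is a restricted sectional path in `Γ(D_N,1)`. -/
def IsRestricted (N m : ℕ) (p : ℕ → ZMod N × DLab) : Prop :=
  IsSectional N m p ∧ NoForbidden N m p

/-- There is a restricted sectional path of length `m` from `x` to `y` in
`Γ(D_N,1)`; these are exactly the arrows `x → y` of the restricted `m`-th power
`μ_m(Γ(D_N,1))`. -/
def RSPath (N m : ℕ) (x y : ZMod N × DLab) : Prop :=
  ∃ p : ℕ → ZMod N × DLab, IsRestricted N m p ∧ p 0 = x ∧ p m = y

/-- The set `V = {(r,s) : s ∈ {0,0̄} or m ∣ s}` inside the vertex set of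
`Γ(D_N,1)`. -/
def VSet (N m : ℕ) : Set (ZMod N × DLab) :=
  {v | v ∈ DVertex N N ∧ ∀ j : ℕ, v.2 = DLab.pos j → m ∣ j}

/-- The map `σ'` from the vertex set of `Γ(D_n,m)` to the vertex set of
`Γ(D_N,1)`, where `N = n*m−m+1`:  `σ'(i,j) = (i*m, j*m)` if `j ∉ {0,0̄}`, or if
`j ∈ {0,0̄}`, `m` is odd and `n` is even; otherwise, with `i.val` the standard
representative of `i`, `σ'(i,j) = (i*m, j*m)` if `⌊i*m/N⌋` is even and
`σ'(i,j) = (i*m, (j̄)*m)` if `⌊i*m/N⌋` is odd (with the conventions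
`0*m = 0` and `0̄*m = 0̄`). -/
def DSigma (n m : ℕ) : ZMod (n * m - m + 1) × DLab → ZMod (n * m - m + 1) × DLab :=
  fun v =>
    match v with
    | (i, DLab.pos j) => (i * (m : ZMod (n * m - m + 1)), DLab.pos (j * m))
    | (i, DLab.z b) =>
        if m % 2 = 1 ∧ n % 2 = 0 then
          (i * (m : ZMod (n * m - m + 1)), DLab.z b)
        else if (i.val * m) / (n * m - m + 1) % 2 = 0 then
          (i * (m : ZMod (n * m - m + 1)), DLab.z b)
        else
          (i * (m : ZMod (n * m - m + 1)), DLab.z (!b))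

/-- `C` is a connected component of the quiver with arrow relation `A`:
it is nonempty, closed under arrows in both directions, and any two of its
vertices are connected by an unoriented path. -/
def IsConnComponent {α : Type*} (A : α → α → Prop) (C : Set α) : Prop :=
  C.Nonempty ∧ (∀ x ∈ C, ∀ y, (A x y ∨ A y x) → y ∈ C) ∧
    ∀ x ∈ C, ∀ y ∈ C, Relation.ReflTransGen (fun a b => A a b ∨ A b a) x y

/-- The set `X_k = {(i, j) : j ∈ {k, m+k, …, (n−2)m+k}}`. -/
def XSet (N n m k : ℕ) : Set (ZMod N × DLab) :=
  {v | ∃ (i : ZMod N) (l : ℕ), l ≤ n - 2 ∧ v = (i, DLab.pos (l * m + k))}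

/-- Vertex set `ℤ/N × {1, …, h}` of the translation quiver `Γ(A_h, N)`
(the Auslander–Reiten quiver of `D^b(A_h)/τ^N`). -/
def AVertex (N h : ℕ) : Set (ZMod N × ℕ) :=
  {v | 1 ≤ v.2 ∧ v.2 ≤ h}

/-- Arrows of `Γ(A_h, N)`: `(i,j) → (i,j−1)` for `2 ≤ j ≤ h` and
`(i,j) → (i+1,j+1)` for `1 ≤ j ≤ h−1`. -/
inductive AArrow (N h : ℕ) : ZMod N × ℕ → ZMod N × ℕ → Prop
  | down (i : ZMod N) (j : ℕ) (h1 : 2 ≤ j) (h2 : j ≤ h) :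
      AArrow N h (i, j) (i, j - 1)
  | up (i : ZMod N) (j : ℕ) (h1 : 1 ≤ j) (h2 : j + 1 ≤ h) :
      AArrow N h (i, j) (i + 1, j + 1)

/-- Translation of `Γ(A_h, N)`: `(i,j) ↦ (i−1, j)`. -/
def ATau (N : ℕ) (v : ZMod N × ℕ) : ZMod N × ℕ := (v.1 - 1, v.2)

/-- Tagged arcs in the punctured `N`-gon: `TArc.arc i k` is the arc
`D_{i, i+1+k*m}` (for `1 ≤ k ≤ n−2`), and `TArc.tag i b` is the tagged arc
`D_{ii}^+` (for `b = false`) or `D_{ii}^-` (for `b = true`). -/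
inductive TArc (N : ℕ) : Type
  | arc : ZMod N → ℕ → TArc N
  | tag : ZMod N → Bool → TArc N

/-- The set of tagged `m`-arcs: arcs `D_{i,i+1+k*m}` with `1 ≤ k ≤ n−2`
together with all tagged arcs `D_{ii}^±`. -/
def TArcSet (N n : ℕ) : Set (TArc N) :=
  {a | ∀ (i : ZMod N) (k : ℕ), a = TArc.arc i k → 1 ≤ k ∧ k ≤ n - 2}

/-- The `m`-moves between tagged `m`-arcs, i.e. the arrows of `Γ_⊙(n,m)`:
`D_{i,i+1+km} → D_{i,i+1+(k+1)m}` for `1 ≤ k ≤ n−3`;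
`D_{i,i+1+km} → D_{i+m,i+1+km} = D_{i+m,(i+m)+1+(k−1)m}` for `2 ≤ k ≤ n−2`;
`D_{i,i+1+(n−2)m} → D_{ii}^±`; and
`D_{ii}^± → D_{i+m,i} = D_{i+m,(i+m)+1+(n−2)m}`. -/
inductive MMove (N n m : ℕ) : TArc N → TArc N → Prop
  | extend (i : ZMod N) (k : ℕ) (h1 : 1 ≤ k) (h2 : k ≤ n - 3) :
      MMove N n m (TArc.arc i k) (TArc.arc i (k + 1))
  | rotate (i : ZMod N) (k : ℕ) (h1 : 2 ≤ k) (h2 : k ≤ n - 2) :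
      MMove N n m (TArc.arc i k) (TArc.arc (i + (m : ZMod N)) (k - 1))
  | toTag (i : ZMod N) (b : Bool) :
      MMove N n m (TArc.arc i (n - 2)) (TArc.tag i b)
  | fromTag (i : ZMod N) (b : Bool) :
      MMove N n m (TArc.tag i b) (TArc.arc (i + (m : ZMod N)) (n - 2))

/-- The map `τ_m` on tagged `m`-arcs: `D_{i,i+1+km} ↦ D_{i−m,(i−m)+1+km}` and
`D_{ii}^± ↦ D_{i−m,i−m}^±` if `m` is even, `D_{ii}^± ↦ D_{i−m,i−m}^∓` if `m`
is odd. -/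
def TauArc (N m : ℕ) : TArc N → TArc N
  | .arc i k => .arc (i - (m : ZMod N)) k
  | .tag i b => .tag (i - (m : ZMod N)) (if m % 2 = 1 then !b else b)

private lemma dtau_pos {N : ℕ} (i : ZMod N) (j : ℕ) :
    DTau N N (i, DLab.pos j) = (i - 1, DLab.pos j) := rfl

private lemma arrow_cases {N : ℕ} {v w : ZMod N × DLab} (h : DArrow N N v w) :
    (∃ i j, 2 ≤ j ∧ j ≤ N - 2 ∧ v = (i, DLab.pos j) ∧ w = (i, DLab.pos (j - 1))) ∨
    (∃ i b, v = (i, DLab.pos 1) ∧ w = (i, DLab.z b)) ∨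
    (∃ i b, v = (i, DLab.z b) ∧ w = (i + 1, DLab.pos 1)) ∨
    (∃ i j, 1 ≤ j ∧ j + 1 ≤ N - 2 ∧ v = (i, DLab.pos j) ∧ w = (i + 1, DLab.pos (j + 1))) := by
  cases h with
  | down i j h1 h2 => exact Or.inl ⟨i, j, h1, h2, rfl, rfl⟩
  | toZ i b => exact Or.inr (Or.inl ⟨i, b, rfl, rfl⟩)
  | fromZ i b => exact Or.inr (Or.inr (Or.inl ⟨i, b, rfl, rfl⟩))
  | up i j h1 h2 => exact Or.inr (Or.inr (Or.inr ⟨i, j, h1, h2, rfl, rfl⟩))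

private lemma path_down {N m : ℕ} (hm : 2 ≤ m) {j : ℕ} (hj1 : m + 1 ≤ j) (hj2 : j ≤ N - 2)
    (i : ZMod N) : RSPath N m (i, DLab.pos j) (i, DLab.pos (j - m)) := by
  refine ⟨fun t => (i, DLab.pos (j - t)), ⟨⟨?_, ?_⟩, ?_⟩, by simp, rfl⟩
  · intro t ht
    have e : j - (t + 1) = (j - t) - 1 := by omega
    simp only [e]
    exact DArrow.down i (j - t) (by omega) (by omega)
  · intro t ht1 ht2 heq
    rw [dtau_pos] at heq
    have h2 := congrArg Prod.snd heq
    simp only [DLab.pos.injEq] at h2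
    omega
  · rintro ⟨t, h1, h2, r, (⟨h, -⟩ | ⟨h, -⟩)⟩ <;> simpa using congrArg Prod.snd h

private lemma path_up {N m : ℕ} {j : ℕ} (hj1 : 1 ≤ j) (hj2 : j + m ≤ N - 2)
    (i : ZMod N) : RSPath N m (i, DLab.pos j) (i + (m : ZMod N), DLab.pos (j + m)) := by
  refine ⟨fun t => (i + (t : ZMod N), DLab.pos (j + t)), ⟨⟨?_, ?_⟩, ?_⟩, by simp, rfl⟩
  · intro t ht
    show DArrow N N (i + (t : ZMod N), DLab.pos (j + t))
      (i + ((t + 1 : ℕ) : ZMod N), DLab.pos (j + (t + 1)))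
    have e1 : ((t + 1 : ℕ) : ZMod N) = (t : ZMod N) + 1 := by push_cast; ring
    have e2 : j + (t + 1) = (j + t) + 1 := by omega
    rw [e2, e1, ← add_assoc]
    exact DArrow.up (i + (t : ZMod N)) (j + t) (by omega) (by omega)
  · intro t ht1 ht2 heq
    rw [dtau_pos] at heq
    have h2 := congrArg Prod.snd heq
    simp only [DLab.pos.injEq] at h2
    omega
  · rintro ⟨t, h1, h2, r, (⟨h, -⟩ | ⟨h, -⟩)⟩ <;> simpa using congrArg Prod.snd h

private lemma shift_restricted {N m : ℕ} {p : ℕ → ZMod N × DLab} (hp : IsRestricted N m p) :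
    IsRestricted N (m - 1) (fun s => p (s + 1)) := by
  obtain ⟨⟨hpath, hsec⟩, hres⟩ := hp
  refine ⟨⟨fun t ht => hpath (t + 1) (by omega), fun t ht1 ht2 => ?_⟩, fun hex => hres ?_⟩
  · have h := hsec (t + 1) (by omega) (by omega)
    have e : t + 1 - 1 = t - 1 + 1 := by omega
    simpa [e] using h
  · obtain ⟨t, ht1, ht2, r, h⟩ := hex
    refine ⟨t + 1, by omega, by omega, r, ?_⟩
    have e : t + 1 - 1 = t - 1 + 1 := by omega
    simpa [e] using h

private lemma asc_aux {N m : ℕ} {p : ℕ → ZMod N × DLab} (hp : IsRestricted N m p)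
    {i : ZMod N} {j : ℕ} (hj : 1 ≤ j)
    (h0 : p 0 = (i, DLab.pos j)) (h1 : p 1 = (i + 1, DLab.pos (j + 1))) :
    ∀ t, t + 1 ≤ m → p t = (i + (t : ZMod N), DLab.pos (j + t)) ∧
      p (t + 1) = (i + ((t + 1 : ℕ) : ZMod N), DLab.pos (j + (t + 1))) ∧
      j + (t + 1) ≤ N - 2 := by
  obtain ⟨⟨hpath, hsec⟩, -⟩ := hp
  intro t
  induction t with
  | zero =>
    intro ht
    refine ⟨by simpa using h0, by simpa using h1, ?_⟩
    rcases arrow_cases (hpath 0 (by omega)) with ⟨i₀, j₀, hb1, hb2, e0, e1⟩ |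
      ⟨i₀, b, e0, e1⟩ | ⟨i₀, b, e0, e1⟩ | ⟨i₀, j₀, hb1, hb2, e0, e1⟩
    · rw [h0] at e0; rw [h1] at e1
      simp only [Prod.mk.injEq, DLab.pos.injEq] at e0 e1
      omega
    · rw [h1] at e1; simpa using congrArg Prod.snd e1
    · rw [h0] at e0; simpa using congrArg Prod.snd e0
    · rw [h0] at e0; rw [h1] at e1
      simp only [Prod.mk.injEq, DLab.pos.injEq] at e0 e1
      omega
  | succ t ih =>
    intro ht
    obtain ⟨hpt, hpt1, hb⟩ := ih (by omega)
    refine ⟨hpt1, ?_⟩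
    rcases arrow_cases (hpath (t + 1) (by omega)) with ⟨i₀, j₀, hc1, hc2, e0, e1⟩ |
      ⟨i₀, b, e0, e1⟩ | ⟨i₀, b, e0, e1⟩ | ⟨i₀, j₀, hc1, hc2, e0, e1⟩
    · -- down after up: contradiction via sectional
      rw [hpt1] at e0
      simp only [Prod.mk.injEq, DLab.pos.injEq] at e0
      obtain ⟨ei, ej⟩ := e0
      exfalso
      apply hsec (t + 1) (by omega) (by omega)
      rw [e1, dtau_pos, show t + 1 - 1 = t from by omega, hpt, ← ei, ← ej]
      rw [show j + (t + 1) - 1 = j + t from by omega,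
        show i + ((t + 1 : ℕ) : ZMod N) - 1 = i + (t : ZMod N) from by push_cast; ring]
    · rw [hpt1] at e0
      simp only [Prod.mk.injEq, DLab.pos.injEq] at e0
      omega
    · rw [hpt1] at e0
      simpa using congrArg Prod.snd e0
    · rw [hpt1] at e0
      simp only [Prod.mk.injEq, DLab.pos.injEq] at e0
      obtain ⟨ei, ej⟩ := e0
      rw [show t + 1 + 1 = (t + 1) + 1 from rfl] at e1
      constructor
      · rw [e1, ← ei, ← ej,
          show i + ((t + 1 : ℕ) : ZMod N) + 1 = i + ((t + 1 + 1 : ℕ) : ZMod N) from by push_cast; ring,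
          show j + (t + 1) + 1 = j + (t + 1 + 1) from by omega]
      · omega

private lemma asc_end {N m : ℕ} {p : ℕ → ZMod N × DLab} (hm : 1 ≤ m) (hp : IsRestricted N m p)
    {i : ZMod N} {j : ℕ} (hj : 1 ≤ j)
    (h0 : p 0 = (i, DLab.pos j)) (h1 : p 1 = (i + 1, DLab.pos (j + 1))) :
    p m = (i + (m : ZMod N), DLab.pos (j + m)) ∧ j + m ≤ N - 2 := by
  obtain ⟨-, h2, h3⟩ := asc_aux hp hj h0 h1 (m - 1) (by omega)
  rw [show m - 1 + 1 = m from by omega] at h2 h3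
  exact ⟨h2, h3⟩

private lemma desc_aux {N m : ℕ} {p : ℕ → ZMod N × DLab} (hp : IsRestricted N m p)
    {i : ZMod N} {j : ℕ} (hj : 2 ≤ j)
    (h0 : p 0 = (i, DLab.pos j)) (h1 : p 1 = (i, DLab.pos (j - 1))) :
    ∀ t, t + 2 ≤ m → p t = (i, DLab.pos (j - t)) ∧
      p (t + 1) = (i, DLab.pos (j - (t + 1))) ∧ t + 1 < j := by
  obtain ⟨⟨hpath, hsec⟩, -⟩ := hp
  intro t
  induction t with
  | zero => intro ht; exact ⟨by simpa using h0, by simpa using h1, by omega⟩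
  | succ t ih =>
    intro ht
    obtain ⟨hpt, hpt1, hlt⟩ := ih (by omega)
    refine ⟨hpt1, ?_⟩
    rcases arrow_cases (hpath (t + 1) (by omega)) with ⟨i₀, j₀, hc1, hc2, e0, e1⟩ |
      ⟨i₀, b, e0, e1⟩ | ⟨i₀, b, e0, e1⟩ | ⟨i₀, j₀, hc1, hc2, e0, e1⟩
    · -- another down step
      rw [hpt1] at e0
      simp only [Prod.mk.injEq, DLab.pos.injEq] at e0
      obtain ⟨ei, ej⟩ := e0
      constructor
      · rw [show t + 1 + 1 = (t + 1) + 1 from rfl] at e1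
        rw [e1, ← ei, ← ej, show j - (t + 1) - 1 = j - (t + 1 + 1) from by omega]
      · omega
    · -- toZ inside the path: next step forced fromZ, contradiction
      exfalso
      rw [hpt1] at e0
      simp only [Prod.mk.injEq, DLab.pos.injEq] at e0
      obtain ⟨ei, ej⟩ := e0
      -- p (t+2) = (i₀, z b), arrow t+2 exists since t+3 ≤ m
      rcases arrow_cases (hpath (t + 2) (by omega)) with ⟨i₁, j₁, hd1, hd2, f0, f1⟩ |
        ⟨i₁, b₁, f0, f1⟩ | ⟨i₁, b₁, f0, f1⟩ | ⟨i₁, j₁, hd1, hd2, f0, f1⟩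
      · rw [show t + 2 = t + 1 + 1 from rfl, e1] at f0
        simpa using congrArg Prod.snd f0
      · rw [show t + 2 = t + 1 + 1 from rfl, e1] at f0
        simpa using congrArg Prod.snd f0
      · rw [show t + 2 = t + 1 + 1 from rfl, e1] at f0
        simp only [Prod.mk.injEq, DLab.z.injEq] at f0
        obtain ⟨fi, fb⟩ := f0
        apply hsec (t + 2) (by omega) (by omega)
        rw [show t + 2 + 1 = (t + 2) + 1 from rfl, f1, dtau_pos,
          show t + 2 - 1 = t + 1 from by omega, hpt1, ej, ← fi, ← ei]
        rw [add_sub_cancel_right]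
      · rw [show t + 2 = t + 1 + 1 from rfl, e1] at f0
        simpa using congrArg Prod.snd f0
    · rw [hpt1] at e0
      simpa using congrArg Prod.snd e0
    · -- up after down: contradiction via sectional
      exfalso
      rw [hpt1] at e0
      simp only [Prod.mk.injEq, DLab.pos.injEq] at e0
      obtain ⟨ei, ej⟩ := e0
      apply hsec (t + 1) (by omega) (by omega)
      rw [show t + 1 + 1 = (t + 1) + 1 from rfl, e1, dtau_pos,
        show t + 1 - 1 = t from by omega, hpt, ← ei, ← ej]
      rw [add_sub_cancel_right, show j - (t + 1) + 1 = j - t from by omega]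

private lemma desc_end {N m : ℕ} {p : ℕ → ZMod N × DLab} (hm : 2 ≤ m) (hp : IsRestricted N m p)
    {i : ZMod N} {j : ℕ} (hj : 2 ≤ j)
    (h0 : p 0 = (i, DLab.pos j)) (h1 : p 1 = (i, DLab.pos (j - 1))) :
    (m + 1 ≤ j ∧ p m = (i, DLab.pos (j - m))) ∨ (j = m ∧ ∃ b, p m = (i, DLab.z b)) := by
  obtain ⟨hpt, hpt1, hlt⟩ := desc_aux hp hj h0 h1 (m - 2) (by omega)
  rw [show m - 2 + 1 = m - 1 from by omega] at hpt1 hlt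
  obtain ⟨⟨hpath, hsec⟩, -⟩ := hp
  rcases arrow_cases (hpath (m - 1) (by omega)) with ⟨i₀, j₀, hc1, hc2, e0, e1⟩ |
    ⟨i₀, b, e0, e1⟩ | ⟨i₀, b, e0, e1⟩ | ⟨i₀, j₀, hc1, hc2, e0, e1⟩
  · rw [hpt1] at e0
    simp only [Prod.mk.injEq, DLab.pos.injEq] at e0
    obtain ⟨ei, ej⟩ := e0
    left
    refine ⟨by omega, ?_⟩
    rw [show m = m - 1 + 1 from by omega, e1, ← ei, ← ej,
      show j - (m - 1) - 1 = j - (m - 1 + 1) from by omega]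
  · rw [hpt1] at e0
    simp only [Prod.mk.injEq, DLab.pos.injEq] at e0
    obtain ⟨ei, ej⟩ := e0
    right
    refine ⟨by omega, b, ?_⟩
    rw [show m = m - 1 + 1 from by omega, e1, ← ei]
  · rw [hpt1] at e0
    simpa using congrArg Prod.snd e0
  · exfalso
    rw [hpt1] at e0
    simp only [Prod.mk.injEq, DLab.pos.injEq] at e0
    obtain ⟨ei, ej⟩ := e0
    apply hsec (m - 1) (by omega) (by omega)
    rw [show m - 1 + 1 = (m - 1) + 1 from rfl, e1, dtau_pos,
      show m - 1 - 1 = m - 2 from by omega, hpt, ← ei, ← ej]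
    rw [add_sub_cancel_right, show j - (m - 1) + 1 = j - (m - 2) from by omega]

private lemma zstart {N m : ℕ} {p : ℕ → ZMod N × DLab} (hm : 2 ≤ m) (hp : IsRestricted N m p)
    {i : ZMod N} {b : Bool} (h0 : p 0 = (i, DLab.z b)) :
    (∃ i' b', p m = (i', DLab.z b')) ∨ p m = (i + (m : ZMod N), DLab.pos m) := by
  have hpath := hp.1.1
  have hsec := hp.1.2
  rcases arrow_cases (hpath 0 (by omega)) with ⟨i₀, j₀, hb1, hb2, e0, e1⟩ |
    ⟨i₀, b₀, e0, e1⟩ | ⟨i₀, b₀, e0, e1⟩ | ⟨i₀, j₀, hb1, hb2, e0, e1⟩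
  · rw [h0] at e0; simpa using congrArg Prod.snd e0
  · rw [h0] at e0; simpa using congrArg Prod.snd e0
  · -- fromZ first
    rw [h0] at e0
    simp only [Prod.mk.injEq, DLab.z.injEq] at e0
    obtain ⟨ei, -⟩ := e0
    rcases arrow_cases (hpath 1 (by omega)) with ⟨i₁, j₁, hc1, hc2, f0, f1⟩ |
      ⟨i₁, b₁, f0, f1⟩ | ⟨i₁, b₁, f0, f1⟩ | ⟨i₁, j₁, hc1, hc2, f0, f1⟩
    · rw [e1] at f0
      simp only [Prod.mk.injEq, DLab.pos.injEq] at f0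
      omega
    · -- toZ at step 1
      rw [e1] at f0
      simp only [Prod.mk.injEq, DLab.pos.injEq] at f0
      obtain ⟨fi, -⟩ := f0
      rcases Nat.lt_or_ge m 3 with hm3 | hm3
      · left
        exact ⟨i₁, b₁, by rw [show m = 1 + 1 from by omega, f1]⟩
      · exfalso
        rcases arrow_cases (hpath 2 (by omega)) with ⟨i₂, j₂, hd1, hd2, g0, g1⟩ |
          ⟨i₂, b₂, g0, g1⟩ | ⟨i₂, b₂, g0, g1⟩ | ⟨i₂, j₂, hd1, hd2, g0, g1⟩
        · rw [show (2:ℕ) = 1 + 1 from rfl, f1] at g0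
          simpa using congrArg Prod.snd g0
        · rw [show (2:ℕ) = 1 + 1 from rfl, f1] at g0
          simpa using congrArg Prod.snd g0
        · rw [show (2:ℕ) = 1 + 1 from rfl, f1] at g0
          simp only [Prod.mk.injEq, DLab.z.injEq] at g0
          obtain ⟨gi, -⟩ := g0
          apply hsec 2 (by omega) (by omega)
          rw [show (2:ℕ) + 1 = 2 + 1 from rfl, g1, dtau_pos, add_sub_cancel_right,
            show (2:ℕ) - 1 = 1 from rfl, e1, ← gi, ← fi]
        · rw [show (2:ℕ) = 1 + 1 from rfl, f1] at g0
          simpa using congrArg Prod.snd g0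
    · rw [e1] at f0
      simpa using congrArg Prod.snd f0
    · -- up at step 1: ascending all the way
      rw [e1] at f0
      simp only [Prod.mk.injEq, DLab.pos.injEq] at f0
      obtain ⟨fi, fj⟩ := f0
      right
      have hq : IsRestricted N (m - 1) (fun s => p (s + 1)) := shift_restricted hp
      have hq0 : (fun s => p (s + 1)) 0 = (i₀ + 1, DLab.pos 1) := by simpa using e1
      have hq1 : (fun s => p (s + 1)) 1 = (i₀ + 1 + 1, DLab.pos (1 + 1)) := by
        show p 2 = _
        rw [show (2:ℕ) = 1 + 1 from rfl, f1, ← fi, ← fj]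
      obtain ⟨hend, -⟩ := asc_end (by omega) hq (le_refl 1) hq0 hq1
      have hend2 : p m = (i₀ + 1 + ((m - 1 : ℕ) : ZMod N), DLab.pos (1 + (m - 1))) := by
        rw [show m = m - 1 + 1 from by omega]
        exact hend
      rw [hend2, show 1 + (m - 1) = m from by omega, ← ei]
      congr 1
      rw [Nat.cast_sub (by omega : 1 ≤ m)]
      push_cast
      ring
  · rw [h0] at e0; simpa using congrArg Prod.snd e0

private lemma classify {N m : ℕ} {p : ℕ → ZMod N × DLab} (hm : 2 ≤ m)
    (hp : IsRestricted N m p) :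
    (∃ i j, p 0 = (i, DLab.pos j) ∧ m + 1 ≤ j ∧ j ≤ N - 2 ∧ p m = (i, DLab.pos (j - m))) ∨
    (∃ i b, p 0 = (i, DLab.pos m) ∧ p m = (i, DLab.z b)) ∨
    (∃ i j, p 0 = (i, DLab.pos j) ∧ 1 ≤ j ∧ j + m ≤ N - 2 ∧
      p m = (i + (m : ZMod N), DLab.pos (j + m))) ∨
    (∃ i b, p 0 = (i, DLab.z b) ∧
      ((∃ i' b', p m = (i', DLab.z b')) ∨ p m = (i + (m : ZMod N), DLab.pos m))) := by
  have hpath := hp.1.1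
  have hsec := hp.1.2
  rcases arrow_cases (hpath 0 (by omega)) with ⟨i₀, j₀, hb1, hb2, e0, e1⟩ |
    ⟨i₀, b₀, e0, e1⟩ | ⟨i₀, b₀, e0, e1⟩ | ⟨i₀, j₀, hb1, hb2, e0, e1⟩
  · -- first arrow down: descending
    rcases desc_end hm hp hb1 e0 (by simpa using e1) with ⟨h1, h2⟩ | ⟨h1, b, h2⟩
    · exact Or.inl ⟨i₀, j₀, e0, h1, hb2, h2⟩
    · exact Or.inr (Or.inl ⟨i₀, b, by rw [← h1]; exact e0, h2⟩)
  · -- first arrow toZ: impossible for m ≥ 2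
    exfalso
    rcases arrow_cases (hpath 1 (by omega)) with ⟨i₁, j₁, hc1, hc2, f0, f1⟩ |
      ⟨i₁, b₁, f0, f1⟩ | ⟨i₁, b₁, f0, f1⟩ | ⟨i₁, j₁, hc1, hc2, f0, f1⟩
    · rw [e1] at f0; simpa using congrArg Prod.snd f0
    · rw [e1] at f0; simpa using congrArg Prod.snd f0
    · rw [e1] at f0
      simp only [Prod.mk.injEq, DLab.z.injEq] at f0
      obtain ⟨fi, -⟩ := f0
      apply hsec 1 (by omega) (by omega)
      rw [show (1:ℕ) + 1 = 1 + 1 from rfl, f1, dtau_pos, add_sub_cancel_right,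
        show (1:ℕ) - 1 = 0 from rfl, e0, ← fi]
    · rw [e1] at f0; simpa using congrArg Prod.snd f0
  · -- first arrow fromZ
    exact Or.inr (Or.inr (Or.inr ⟨i₀, b₀, e0, zstart hm hp e0⟩))
  · -- first arrow up: ascending
    obtain ⟨h1, h2⟩ := asc_end (by omega) hp hb1 e0 e1
    exact Or.inr (Or.inr (Or.inl ⟨i₀, j₀, e0, hb1, h2, h1⟩))

private lemma dtau_iter {N : ℕ} (t : ℕ) (i : ZMod N) (j : ℕ) :
    (DTau N N)^[t] (i, DLab.pos j) = (i - (t : ZMod N), DLab.pos j) := by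
  induction t generalizing i with
  | zero => simp
  | succ t ih =>
    rw [Function.iterate_succ_apply, dtau_pos, ih]
    congr 1
    push_cast
    ring

private lemma aarrow_cases {N h : ℕ} {v w : ZMod N × ℕ} (ha : AArrow N h v w) :
    (∃ i j, 2 ≤ j ∧ j ≤ h ∧ v = (i, j) ∧ w = (i, j - 1)) ∨
    (∃ i j, 1 ≤ j ∧ j + 1 ≤ h ∧ v = (i, j) ∧ w = (i + 1, j + 1)) := by
  cases ha with
  | down i j h1 h2 => exact Or.inl ⟨i, j, h1, h2, rfl, rfl⟩
  | up i j h1 h2 => exact Or.inr ⟨i, j, h1, h2, rfl, rfl⟩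

/-- For `n ≥ 3`, `m ≥ 2`, `N = n*m−m+1` and `1 ≤ k ≤ m−1`,
the set `X_k` is a connected component of `μ_m(Γ(D_N,1))`, and the full
subquiver induced by `X_k`, with translation `τ^m`, is isomorphic as a
translation quiver to `Γ(A_{n−1}, N)`. -/
theorem X_k_component_iso_A_type (n m N k : ℕ) (hn : 3 ≤ n) (hm : 2 ≤ m)
    (hN : N = n * m - m + 1) (hk1 : 1 ≤ k) (hk2 : k ≤ m - 1) :
    IsConnComponent (RSPath N m) (XSet N n m k) ∧
    ∃ φ : ZMod N × DLab → ZMod N × ℕ,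
      Set.BijOn φ (XSet N n m k) (AVertex N (n - 1)) ∧
      (∀ x ∈ XSet N n m k, ∀ y ∈ XSet N n m k,
        (RSPath N m x y ↔ AArrow N (n - 1) (φ x) (φ y))) ∧
      ∀ x ∈ XSet N n m k, φ ((DTau N N)^[m] x) = ATau N (φ x) := by
  have hm0 : 0 < m := by omega
  haveI : NeZero N := ⟨by
    have : m ≤ n * m := Nat.le_mul_of_pos_left m (by omega)
    omega⟩
  have hNval : N = (n - 1) * m + 1 := by rw [hN, Nat.sub_one_mul]
  have hsm : (n - 2) * m + m = (n - 1) * m := by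
    calc (n - 2) * m + m = (n - 2 + 1) * m := (Nat.succ_mul _ _).symm
      _ = (n - 1) * m := by congr 1; omega
  have lb : ∀ l : ℕ, l ≤ n - 2 → l * m + k ≤ N - 2 := by
    intro l hl
    have h1 : l * m ≤ (n - 2) * m := Nat.mul_le_mul_right _ hl
    omega
  have lc : ∀ l : ℕ, l * m + k + m ≤ N - 2 → l + 1 ≤ n - 2 := by
    intro l hc
    by_contra hcon
    have h1 : (n - 2) * m ≤ l * m := Nat.mul_le_mul_right _ (by omega)
    omega
  have lm1 : ∀ l : ℕ, 1 ≤ l → m ≤ l * m := fun l hl => Nat.le_mul_of_pos_left m (by omega)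
  have ld : ∀ l : ℕ, m + 1 ≤ l * m + k → 1 ≤ l := by
    intro l h
    rcases Nat.eq_zero_or_pos l with h0 | h0
    · subst h0; simp at h; omega
    · exact h0
  have lsub : ∀ l : ℕ, 1 ≤ l → (l - 1) * m + k + m = l * m + k := by
    intro l hl
    have h1 : (l - 1) * m = l * m - m := Nat.sub_one_mul _ _
    have h2 := lm1 l hl
    omega
  have ladd : ∀ l : ℕ, (l + 1) * m + k = l * m + k + m := by
    intro l
    have : (l + 1) * m = l * m + m := Nat.succ_mul _ _
    omega
  have lne : ∀ l : ℕ, l * m + k ≠ m := by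
    intro l h
    rcases Nat.eq_zero_or_pos l with h0 | h0
    · subst h0; simp at h; omega
    · have := lm1 l h0; omega
  have lcancel : ∀ a b : ℕ, a * m + k = b * m + k → a = b := by
    intro a b h
    exact Nat.eq_of_mul_eq_mul_right hm0 (by omega)
  set u : ZMod N := 1 - (n : ZMod N) with hu_def
  have hNz : (((n - 1) * m + 1 : ℕ) : ZMod N) = 0 := by rw [← hNval]; exact ZMod.natCast_self N
  have hcast : ((n - 1 : ℕ) : ZMod N) = (n : ZMod N) - 1 := by
    rw [Nat.cast_sub (by omega)]; simp
  push_cast [hcast] at hNz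
  have hu : (m : ZMod N) * u = 1 := by rw [hu_def]; linear_combination -hNz
  have cancel_u : ∀ a a' : ZMod N, a * u = a' * u → a = a' := by
    intro a a' h
    have h2 : u * (m : ZMod N) = 1 := by rw [mul_comm]; exact hu
    calc a = a * (u * (m : ZMod N)) := by rw [h2, mul_one]
      _ = a' * (u * (m : ZMod N)) := by rw [← mul_assoc, h, mul_assoc]
      _ = a' := by rw [h2, mul_one]
  have Pdown : ∀ (i : ZMod N) (l : ℕ), 1 ≤ l → l ≤ n - 2 →
      RSPath N m (i, DLab.pos (l * m + k)) (i, DLab.pos ((l - 1) * m + k)) := by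
    intro i l h1 h2
    have e : (l - 1) * m + k = l * m + k - m := by have := lsub l h1; omega
    rw [e]
    exact path_down hm (by have := lm1 l h1; omega) (lb l h2) i
  have Pup : ∀ (i : ZMod N) (l : ℕ), l + 1 ≤ n - 2 →
      RSPath N m (i, DLab.pos (l * m + k)) (i + (m : ZMod N), DLab.pos ((l + 1) * m + k)) := by
    intro i l h1
    have e : (l + 1) * m + k = (l * m + k) + m := by have := ladd l; omega
    rw [e]
    exact path_up (by omega) (by have := lb (l + 1) h1; have := ladd l; omega) i
  have forwardX : ∀ (i : ZMod N) (l : ℕ), l ≤ n - 2 → ∀ y,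
      RSPath N m (i, DLab.pos (l * m + k)) y →
      (1 ≤ l ∧ y = (i, DLab.pos ((l - 1) * m + k))) ∨
      (l + 1 ≤ n - 2 ∧ y = (i + (m : ZMod N), DLab.pos ((l + 1) * m + k))) := by
    intro i l hl y hy
    obtain ⟨p, hp, hp0, hpm⟩ := hy
    rcases classify hm hp with ⟨i₀, j₀, e0, hj1, hj2, em⟩ | ⟨i₀, b, e0, em⟩ |
      ⟨i₀, j₀, e0, hj1, hj2, em⟩ | ⟨i₀, b, e0, -⟩
    · rw [hp0] at e0
      simp only [Prod.mk.injEq, DLab.pos.injEq] at e0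
      obtain ⟨ei, ej⟩ := e0
      have h1 : 1 ≤ l := ld l (by omega)
      left
      refine ⟨h1, ?_⟩
      rw [← hpm, em, ← ei]
      have := lsub l h1
      rw [show j₀ - m = (l - 1) * m + k from by omega]
    · rw [hp0] at e0
      simp only [Prod.mk.injEq, DLab.pos.injEq] at e0
      exact absurd e0.2 (lne l)
    · rw [hp0] at e0
      simp only [Prod.mk.injEq, DLab.pos.injEq] at e0
      obtain ⟨ei, ej⟩ := e0
      right
      have := ladd l
      refine ⟨lc l (by omega), ?_⟩
      rw [← hpm, em, ← ei]
      rw [show j₀ + m = (l + 1) * m + k from by omega]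
    · rw [hp0] at e0
      simpa using congrArg Prod.snd e0
  have backwardX : ∀ (y : ZMod N × DLab) (i : ZMod N) (l : ℕ), l ≤ n - 2 →
      RSPath N m y (i, DLab.pos (l * m + k)) → y ∈ XSet N n m k := by
    intro y i l hl hy
    obtain ⟨p, hp, hp0, hpm⟩ := hy
    rcases classify hm hp with ⟨i₀, j₀, e0, hj1, hj2, em⟩ | ⟨i₀, b, e0, em⟩ |
      ⟨i₀, j₀, e0, hj1, hj2, em⟩ | ⟨i₀, b, e0, hrest⟩
    · rw [hpm] at em
      simp only [Prod.mk.injEq, DLab.pos.injEq] at em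
      obtain ⟨ei, ej⟩ := em
      have h2 := ladd l
      have hj : j₀ = (l + 1) * m + k := by omega
      refine ⟨i, l + 1, lc l (by omega), ?_⟩
      rw [← hp0, e0, ei, hj]
    · rw [hpm] at em
      simpa using congrArg Prod.snd em
    · rw [hpm] at em
      simp only [Prod.mk.injEq, DLab.pos.injEq] at em
      obtain ⟨ei, ej⟩ := em
      have h1 : 1 ≤ l := by
        rcases Nat.eq_zero_or_pos l with h0 | h0
        · exfalso; subst h0; simp at ej; omega
        · exact h0
      have h2 := lsub l h1
      have hj : j₀ = (l - 1) * m + k := by omega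
      refine ⟨i - (m : ZMod N), l - 1, by omega, ?_⟩
      rw [← hp0, e0, hj]
      have hi : i₀ = i - (m : ZMod N) := by rw [ei]; ring
      rw [hi]
    · rcases hrest with ⟨i', b', em⟩ | em
      · rw [hpm] at em; simpa using congrArg Prod.snd em
      · rw [hpm] at em
        simp only [Prod.mk.injEq, DLab.pos.injEq] at em
        exact absurd em.2 (lne l)
  constructor
  · refine ⟨⟨(0, DLab.pos (0 * m + k)), ⟨0, 0, by omega, rfl⟩⟩, ?_, ?_⟩
    · rintro x ⟨i, l, hl, rfl⟩ y hxy
      rcases hxy with h | h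
      · rcases forwardX i l hl y h with ⟨h1, rfl⟩ | ⟨h1, rfl⟩
        · exact ⟨i, l - 1, by omega, rfl⟩
        · exact ⟨i + (m : ZMod N), l + 1, h1, rfl⟩
      · exact backwardX y i l hl h
    · have hsymm : Symmetric (fun a b => RSPath N m a b ∨ RSPath N m b a) :=
        fun a b h => h.symm
      have connBase : ∀ l : ℕ, l ≤ n - 2 → ∀ i : ZMod N,
          Relation.ReflTransGen (fun a b => RSPath N m a b ∨ RSPath N m b a)
            (i, DLab.pos (l * m + k)) (i, DLab.pos (0 * m + k)) := by
        intro l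
        induction l with
        | zero => intro _ i; exact Relation.ReflTransGen.refl
        | succ l ih =>
          intro hl i
          refine Relation.ReflTransGen.head (Or.inl ?_) (ih (by omega) i)
          simpa using Pdown i (l + 1) (by omega) hl
      have connShift : ∀ i : ZMod N,
          Relation.ReflTransGen (fun a b => RSPath N m a b ∨ RSPath N m b a)
            (i, DLab.pos (0 * m + k)) (i + (m : ZMod N), DLab.pos (0 * m + k)) := by
        intro i
        refine Relation.ReflTransGen.head (Or.inl (Pup i 0 (by omega)))
          (Relation.ReflTransGen.single (Or.inl ?_))
        simpa using Pdown (i + (m : ZMod N)) 1 (le_refl 1) (by omega)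
      have connIter : ∀ (d : ℕ) (i : ZMod N),
          Relation.ReflTransGen (fun a b => RSPath N m a b ∨ RSPath N m b a)
            (i, DLab.pos (0 * m + k))
            (i + (d : ZMod N) * (m : ZMod N), DLab.pos (0 * m + k)) := by
        intro d
        induction d with
        | zero =>
          intro i
          have : i + ((0 : ℕ) : ZMod N) * (m : ZMod N) = i := by push_cast; ring
          rw [this]
        | succ d ih =>
          intro i
          have h1 := (ih i).trans (connShift (i + (d : ZMod N) * (m : ZMod N)))
          have e : i + (d : ZMod N) * (m : ZMod N) + (m : ZMod N)
              = i + ((d + 1 : ℕ) : ZMod N) * (m : ZMod N) := by push_cast; ring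
          rwa [e] at h1
      rintro x ⟨i, l, hl, rfl⟩ y ⟨i', l', hl', rfl⟩
      have hreach : Relation.ReflTransGen (fun a b => RSPath N m a b ∨ RSPath N m b a)
          (i, DLab.pos (0 * m + k)) (i', DLab.pos (0 * m + k)) := by
        have h1 := connIter (((i' - i) * u).val) i
        have e : i + ((((i' - i) * u).val : ℕ) : ZMod N) * (m : ZMod N) = i' := by
          rw [ZMod.natCast_val, ZMod.cast_id, mul_assoc, mul_comm u, hu, mul_one]
          ring
        rwa [e] at h1
      exact ((connBase l hl i).trans hreach).trans
        (@Relation.ReflTransGen.symmetric _ _ ⟨fun a b h => hsymm h⟩ |>.symm _ _ (connBase l' hl' i'))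
  · have hdiv : ∀ l : ℕ, (l * m + k) / m = l := by
      intro l
      rw [add_comm]
      rw [Nat.add_mul_div_right k l hm0, Nat.div_eq_of_lt (show k < m by omega)]
      omega
    set φ : ZMod N × DLab → ZMod N × ℕ :=
      fun v => (v.1 * u, match v.2 with | DLab.pos j => j / m + 1 | DLab.z _ => 0)
      with hφ_def
    have hφ : ∀ (i : ZMod N) (l : ℕ), φ (i, DLab.pos (l * m + k)) = (i * u, l + 1) := by
      intro i l
      show (i * u, (l * m + k) / m + 1) = (i * u, l + 1)
      rw [hdiv]
    refine ⟨φ, ⟨?_, ?_, ?_⟩, ?_, ?_⟩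
    · rintro v ⟨i, l, hl, rfl⟩
      rw [hφ]
      exact ⟨by omega, by omega⟩
    · rintro v ⟨i, l, hl, rfl⟩ v' ⟨i', l', hl', rfl⟩ h
      rw [hφ, hφ] at h
      simp only [Prod.mk.injEq] at h
      obtain ⟨h1, h2⟩ := h
      rw [cancel_u i i' h1, show l = l' from by omega]
    · rintro ⟨a, jj⟩ ⟨h1, h2⟩
      refine ⟨(a * (m : ZMod N), DLab.pos ((jj - 1) * m + k)), ⟨a * (m : ZMod N), jj - 1, by omega, rfl⟩, ?_⟩
      rw [hφ, mul_assoc, hu, mul_one, show jj - 1 + 1 = jj from by omega]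
    · rintro x ⟨i, l, hl, rfl⟩ y ⟨i', l', hl', rfl⟩
      rw [hφ, hφ]
      constructor
      · intro h
        rcases forwardX i l hl _ h with ⟨h1, hy⟩ | ⟨h1, hy⟩
        · simp only [Prod.mk.injEq, DLab.pos.injEq] at hy
          obtain ⟨ei, ej⟩ := hy
          have el : l' = l - 1 := lcancel _ _ ej
          rw [ei, el, show l - 1 + 1 = l from by omega]
          have := AArrow.down (N := N) (h := n - 1) (i * u) (l + 1) (by omega) (by omega)
          rwa [show l + 1 - 1 = l from by omega] at this
        · simp only [Prod.mk.injEq, DLab.pos.injEq] at hy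
          obtain ⟨ei, ej⟩ := hy
          have el : l' = l + 1 := lcancel _ _ ej
          rw [ei, el, add_mul, hu]
          exact AArrow.up (i * u) (l + 1) (by omega) (by omega)
      · intro h
        rcases aarrow_cases h with ⟨i₀, j₀, hc1, hc2, f0, f1⟩ | ⟨i₀, j₀, hc1, hc2, f0, f1⟩
        · simp only [Prod.mk.injEq] at f0 f1
          obtain ⟨g1, g2⟩ := f0
          obtain ⟨g3, g4⟩ := f1
          have hi : i' = i := cancel_u i' i (by rw [g3, ← g1])
          have hl2 : l' = l - 1 ∧ 1 ≤ l := by omega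
          have := Pdown i l hl2.2 hl
          rw [hi]
          rwa [show l - 1 = l' from hl2.1.symm] at this
        · simp only [Prod.mk.injEq] at f0 f1
          obtain ⟨g1, g2⟩ := f0
          obtain ⟨g3, g4⟩ := f1
          have hi : i' = i + (m : ZMod N) := by
            apply cancel_u
            rw [g3, ← g1, add_mul, hu]
          have hl2 : l' = l + 1 := by omega
          have hup : l + 1 ≤ n - 2 := by omega
          have := Pup i l hup
          rw [hi, hl2]
          exact this
    · rintro x ⟨i, l, hl, rfl⟩
      rw [dtau_iter, hφ, hφ]
      show ((i - (m : ZMod N)) * u, l + 1) = ((i * u, l + 1).1 - 1, (i * u, l + 1).2)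
      rw [sub_mul, hu]
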